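/- Let g : [0,1] → ℝ be twice continuously differentiable, let o, m_o ∈ ℕ with o, m_o ≥ 1 and m := o·m_o. Then Σ_{i=1}^{m_o} ( (1/o)·Σ_{t=1}^o g(ξ_{(i−1)o+t, m}) − g(ξ_{i, m_o}) )² ≤ ‖g''‖_∞² / (576·m_o³), where ‖g''‖_∞ := sup_{x∈[0,1]} |g''(x)|. -/

import Mathlib

open Real

/-- The midpoint grid points `ξ_{j,n} = (2j−1)/(2n)`. -/
noncomputable def gridPt (n j : ℕ) : ℝ := (2 * (j : ℝ) - 1) / (2 * (n : ℝ))

lemma stmt16_sum_odd (o : ℕ) : ∑ t ∈ Finset.Icc 1 o, (2 * (t:ℝ) - 1) = (o:ℝ)^2 := by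
  induction o with
  | zero => simp
  | succ n ih =>
      rw [← Finset.insert_Icc_right_eq_Icc_add_one (by omega),
        Finset.sum_insert (by simp [Finset.mem_Icc])]
      push_cast
      rw [ih]; ring

lemma stmt16_sum_odd_sq (o : ℕ) :
    ∑ t ∈ Finset.Icc 1 o, (2 * (t:ℝ) - 1)^2 = (4*(o:ℝ)^3 - o)/3 := by
  induction o with
  | zero => simp
  | succ n ih =>
      rw [← Finset.insert_Icc_right_eq_Icc_add_one (by omega),
        Finset.sum_insert (by simp [Finset.mem_Icc])]
      push_cast
      rw [ih]; ring

lemma stmt16_taylor_fwd (f f' f'' : ℝ → ℝ) (a b : ℝ) (hab : a ≤ b)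
    (h1 : ∀ t ∈ Set.Icc a b, HasDerivWithinAt f (f' t) (Set.Icc a b) t)
    (h2 : ∀ t ∈ Set.Icc a b, HasDerivWithinAt f' (f'' t) (Set.Icc a b) t)
    (B : ℝ) (hB : ∀ t ∈ Set.Icc a b, |f'' t| ≤ B) :
    |f b - f a - f' a * (b - a)| ≤ B / 2 * (b - a)^2 := by
  have hamem : a ∈ Set.Icc a b := ⟨le_refl a, hab⟩
  have step1 : ∀ t ∈ Set.Icc a b, ‖f' t - f' a‖ ≤ B * (t - a) :=
    norm_image_sub_le_of_norm_deriv_le_segment' h2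
      (fun x hx => by simpa [Real.norm_eq_abs] using hB x (Set.Ico_subset_Icc_self hx))
  set F : ℝ → ℝ := fun t => f t - (f a + f' a * (t - a)) with hF
  have hFc : ContinuousOn F (Set.Icc a b) := by
    have : ContinuousOn f (Set.Icc a b) := fun t ht => (h1 t ht).continuousWithinAt
    fun_prop
  have hF' : ∀ t ∈ Set.Ico a b, HasDerivWithinAt F (f' t - f' a) (Set.Ici t) t := by
    intro t ht
    have hmem : Set.Icc a b ∈ nhdsWithin t (Set.Ici t) :=
      mem_nhdsWithin.2 ⟨Set.Iio b, isOpen_Iio, ht.2,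
        fun y hy => ⟨ht.1.trans hy.2, hy.1.le⟩⟩
    have hf : HasDerivWithinAt f (f' t) (Set.Ici t) t :=
      (h1 t (Set.Ico_subset_Icc_self ht)).mono_of_mem_nhdsWithin hmem
    have hlin : HasDerivWithinAt (fun t => f a + f' a * (t - a)) (f' a) (Set.Ici t) t := by
      simpa using (((hasDerivWithinAt_id t (Set.Ici t)).sub_const a).const_mul (f' a)).const_add (f a)
    exact hf.sub hlin
  have hBd : ∀ t : ℝ, HasDerivAt (fun t => B/2*(t-a)^2) (B*(t-a)) t := by
    intro t
    have := (((hasDerivAt_id t).sub_const a).pow 2).const_mul (B/2)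
    refine this.congr_deriv ?_
    simp only [id]; ring
  have bound : ∀ t ∈ Set.Ico a b, ‖f' t - f' a‖ ≤ B * (t - a) :=
    fun t ht => step1 t (Set.Ico_subset_Icc_self ht)
  have ha0 : ‖F a‖ ≤ B/2*(a-a)^2 := by simp [hF]
  have := image_norm_le_of_norm_deriv_right_le_deriv_boundary hFc hF' ha0 hBd bound
    (Set.right_mem_Icc.2 hab)
  calc |f b - f a - f' a * (b - a)| = ‖F b‖ := by
        rw [Real.norm_eq_abs, hF]; ring_nf
    _ ≤ B/2*(b-a)^2 := this

lemma stmt16_taylor2 (g g' g'' : ℝ → ℝ)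
    (hg' : ∀ x ∈ Set.Icc (0:ℝ) 1, HasDerivWithinAt g (g' x) (Set.Icc 0 1) x)
    (hg'' : ∀ x ∈ Set.Icc (0:ℝ) 1, HasDerivWithinAt g' (g'' x) (Set.Icc 0 1) x)
    (B : ℝ) (hB : ∀ x ∈ Set.Icc (0:ℝ) 1, |g'' x| ≤ B)
    (c x : ℝ) (hc : c ∈ Set.Icc (0:ℝ) 1) (hx : x ∈ Set.Icc (0:ℝ) 1) :
    |g x - g c - g' c * (x - c)| ≤ B / 2 * (x - c)^2 := by
  rcases le_total c x with h | h
  · have hsub : Set.Icc c x ⊆ Set.Icc (0:ℝ) 1 := Set.Icc_subset_Icc hc.1 hx.2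
    exact stmt16_taylor_fwd g g' g'' c x h
      (fun t ht => (hg' t (hsub ht)).mono hsub)
      (fun t ht => (hg'' t (hsub ht)).mono hsub)
      B (fun t ht => hB t (hsub ht))
  · have hsub : Set.Icc x c ⊆ Set.Icc (0:ℝ) 1 := Set.Icc_subset_Icc hx.1 hc.2
    have hmaps : Set.MapsTo (fun t => c + x - t) (Set.Icc x c) (Set.Icc x c) := by
      intro t ht
      simp only [Set.mem_Icc] at ht ⊢
      constructor <;> [linarith [ht.2]; linarith [ht.1]]
    have key := stmt16_taylor_fwd (fun t => g (c + x - t)) (fun t => -g' (c + x - t))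
      (fun t => g'' (c + x - t)) x c h
      (fun t ht => by
        have inner : HasDerivWithinAt (fun y : ℝ => c + x - y) (-1) (Set.Icc x c) t :=
          (hasDerivWithinAt_id t _).const_sub (c + x)
        have outer : HasDerivWithinAt g (g' (c + x - t)) (Set.Icc x c) (c + x - t) :=
          (hg' (c + x - t) (hsub (hmaps ht))).mono hsub
        simpa [Function.comp_def] using HasDerivWithinAt.comp t outer inner hmaps)
      (fun t ht => by
        have inner : HasDerivWithinAt (fun y : ℝ => c + x - y) (-1) (Set.Icc x c) t :=
          (hasDerivWithinAt_id t _).const_sub (c + x)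
        have outer : HasDerivWithinAt g' (g'' (c + x - t)) (Set.Icc x c) (c + x - t) :=
          (hg'' (c + x - t) (hsub (hmaps ht))).mono hsub
        have h2 := (HasDerivWithinAt.comp t outer inner hmaps).neg
        simpa [mul_comm, Function.comp_def, Pi.neg_def] using h2)
      B (fun t ht => hB _ (hsub (hmaps ht)))
    simp only [show c + x - c = x by ring, show c + x - x = c by ring] at key
    calc |g x - g c - g' c * (x - c)| = |g x - g c - -g' c * (c - x)| := by ring_nf
      _ ≤ B / 2 * (c - x)^2 := key
      _ = B / 2 * (x - c)^2 := by ring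

lemma stmt16_gridPt_mem {n j : ℕ} (h1 : 1 ≤ j) (h2 : j ≤ n) :
    gridPt n j ∈ Set.Icc (0:ℝ) 1 := by
  have hn : (0:ℝ) < n := by
    have : 1 ≤ n := h1.trans h2
    exact_mod_cast Nat.lt_of_lt_of_le Nat.zero_lt_one this
  have hj : (1:ℝ) ≤ j := by exact_mod_cast h1
  have hjn : (j:ℝ) ≤ n := by exact_mod_cast h2
  unfold gridPt
  constructor
  · apply div_nonneg <;> linarith
  · rw [div_le_one (by linarith)]; linarith

/-- Let `g : [0,1] → ℝ` be twice continuously differentiable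
(with first and second derivatives `g'` and `g''` on `[0,1]`), let `o, m_o ≥ 1` and
`m = o·m_o`.  Then, with `B` any bound on `|g''|` on `[0,1]`
(in the paper, `B = ‖g''‖_∞`):
`Σ_{i=1}^{m_o} ((1/o) Σ_{t=1}^o g(ξ_{(i−1)o+t,m}) − g(ξ_{i,m_o}))² ≤ B²/(576·m_o³)`. -/
theorem stmt_16 (g g' g'' : ℝ → ℝ)
    (hg' : ∀ x ∈ Set.Icc (0:ℝ) 1, HasDerivWithinAt g (g' x) (Set.Icc 0 1) x)
    (hg'' : ∀ x ∈ Set.Icc (0:ℝ) 1, HasDerivWithinAt g' (g'' x) (Set.Icc 0 1) x)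
    (hcont : ContinuousOn g'' (Set.Icc 0 1))
    (B : ℝ) (hB : ∀ x ∈ Set.Icc (0:ℝ) 1, |g'' x| ≤ B)
    (o mo : ℕ) (ho : 1 ≤ o) (hmo : 1 ≤ mo) (m : ℕ) (hm : m = o * mo) :
    (∑ i ∈ Finset.Icc 1 mo,
        ((1 / (o : ℝ)) * (∑ t ∈ Finset.Icc 1 o, g (gridPt m ((i - 1) * o + t)))
          - g (gridPt mo i)) ^ 2)
      ≤ B ^ 2 / (576 * (mo : ℝ) ^ 3) := by
  have hB0 : 0 ≤ B := le_trans (abs_nonneg _) (hB 0 (by norm_num))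
  have hoR : (0:ℝ) < o := by exact_mod_cast ho
  have hmoR : (0:ℝ) < mo := by exact_mod_cast hmo
  have hmR : (m:ℝ) = (o:ℝ) * mo := by rw [hm]; push_cast; ring
  have hmpos : (0:ℝ) < m := by rw [hmR]; positivity
  have key : ∀ i ∈ Finset.Icc 1 mo,
      ((1 / (o : ℝ)) * (∑ t ∈ Finset.Icc 1 o, g (gridPt m ((i - 1) * o + t)))
          - g (gridPt mo i)) ^ 2 ≤ B^2 / (576 * (mo:ℝ)^4) := by
    intro i hi
    rw [Finset.mem_Icc] at hi
    obtain ⟨i', rfl⟩ : ∃ i', i = i' + 1 := ⟨i - 1, by omega⟩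
    simp only [Nat.add_sub_cancel]
    set c := gridPt mo (i' + 1) with hcdef
    have hc01 : c ∈ Set.Icc (0:ℝ) 1 := stmt16_gridPt_mem hi.1 hi.2
    set d : ℕ → ℝ := fun t => (2*(t:ℝ) - 1 - (o:ℝ)) / (2*(m:ℝ)) with hd
    have hx_eq : ∀ t ∈ Finset.Icc 1 o, gridPt m (i' * o + t) = c + d t := by
      intro t ht
      rw [hcdef, hd]
      unfold gridPt
      push_cast
      rw [hmR]
      field_simp
      ring
    have hx01 : ∀ t ∈ Finset.Icc 1 o, gridPt m (i' * o + t) ∈ Set.Icc (0:ℝ) 1 := by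
      intro t ht
      rw [Finset.mem_Icc] at ht
      apply stmt16_gridPt_mem (by omega)
      calc i' * o + t ≤ i' * o + o := by omega
        _ = (i' + 1) * o := by ring
        _ ≤ mo * o := Nat.mul_le_mul_right o hi.2
        _ = m := by rw [hm, Nat.mul_comm]
    have hdsum : ∑ t ∈ Finset.Icc 1 o, d t = 0 := by
      rw [hd, ← Finset.sum_div]
      have : ∑ t ∈ Finset.Icc 1 o, (2*(t:ℝ) - 1 - (o:ℝ)) = 0 := by
        have : (fun t : ℕ => 2*(t:ℝ) - 1 - (o:ℝ)) = fun t : ℕ => (2*(t:ℝ) - 1) - (o:ℝ) := rfl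
        rw [this, Finset.sum_sub_distrib, stmt16_sum_odd, Finset.sum_const, Nat.card_Icc,
          Nat.add_sub_cancel, nsmul_eq_mul]
        ring
      rw [this]; simp
    have hdsq : ∑ t ∈ Finset.Icc 1 o, (d t)^2 = ((o:ℝ)^3 - o) / (12 * (m:ℝ)^2) := by
      rw [hd]
      simp only [div_pow]
      rw [← Finset.sum_div]
      have h1 : ∑ t ∈ Finset.Icc 1 o, (2*(t:ℝ) - 1 - (o:ℝ))^2 = ((o:ℝ)^3 - o)/3 := by
        have expand : ∀ t : ℕ, (2*(t:ℝ) - 1 - (o:ℝ))^2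
            = ((2*(t:ℝ) - 1)^2 - 2*(o:ℝ)*(2*(t:ℝ) - 1)) + (o:ℝ)^2 := fun t => by ring
        simp only [expand]
        rw [Finset.sum_add_distrib, Finset.sum_sub_distrib, stmt16_sum_odd_sq,
          ← Finset.mul_sum, stmt16_sum_odd, Finset.sum_const, Nat.card_Icc,
          Nat.add_sub_cancel, nsmul_eq_mul]
        ring
      rw [h1, div_div, show (3:ℝ)*(2*(m:ℝ))^2 = 12*(m:ℝ)^2 by ring]
    have hgs : ∑ t ∈ Finset.Icc 1 o, g (gridPt m (i' * o + t))
        = ∑ t ∈ Finset.Icc 1 o, g (c + d t) :=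
      Finset.sum_congr rfl (fun t ht => by rw [hx_eq t ht])
    have hEeq : (1 / (o:ℝ)) * (∑ t ∈ Finset.Icc 1 o, g (gridPt m (i' * o + t))) - g c
        = (1 / (o:ℝ)) * ∑ t ∈ Finset.Icc 1 o, (g (c + d t) - g c - g' c * d t) := by
      rw [hgs, Finset.sum_sub_distrib, Finset.sum_sub_distrib, ← Finset.mul_sum, hdsum,
        Finset.sum_const, Nat.card_Icc, Nat.add_sub_cancel, nsmul_eq_mul, mul_zero, sub_zero]
      field_simp
    have hRb : ∀ t ∈ Finset.Icc 1 o, |g (c + d t) - g c - g' c * d t| ≤ B/2 * (d t)^2 := by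
      intro t ht
      have hxm := hx01 t ht
      rw [hx_eq t ht] at hxm
      have := stmt16_taylor2 g g' g'' hg' hg'' B hB c (c + d t) hc01 hxm
      simpa using this
    have habs : |(1 / (o:ℝ)) * (∑ t ∈ Finset.Icc 1 o, g (gridPt m (i' * o + t))) - g c|
        ≤ B / (24 * (mo:ℝ)^2) := by
      rw [hEeq, abs_mul, abs_of_nonneg (by positivity : (0:ℝ) ≤ 1/(o:ℝ))]
      calc (1/(o:ℝ)) * |∑ t ∈ Finset.Icc 1 o, (g (c + d t) - g c - g' c * d t)|
          ≤ (1/(o:ℝ)) * ∑ t ∈ Finset.Icc 1 o, |g (c + d t) - g c - g' c * d t| :=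
            mul_le_mul_of_nonneg_left (Finset.abs_sum_le_sum_abs _ _) (by positivity)
        _ ≤ (1/(o:ℝ)) * ∑ t ∈ Finset.Icc 1 o, (B/2 * (d t)^2) :=
            mul_le_mul_of_nonneg_left (Finset.sum_le_sum hRb) (by positivity)
        _ = (1/(o:ℝ)) * (B/2 * (((o:ℝ)^3 - o) / (12 * (m:ℝ)^2))) := by
            rw [← Finset.mul_sum, hdsq]
        _ ≤ (1/(o:ℝ)) * (B/2 * ((o:ℝ) / (12 * (mo:ℝ)^2))) := by
            have hle : ((o:ℝ)^3 - o) / (12 * (m:ℝ)^2) ≤ (o:ℝ) / (12 * (mo:ℝ)^2) := by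
              rw [hmR, div_le_div_iff₀ (by positivity) (by positivity)]
              nlinarith [mul_nonneg hoR.le (sq_nonneg (mo:ℝ)), sq_nonneg (mo:ℝ), hoR.le]
            exact mul_le_mul_of_nonneg_left
              (mul_le_mul_of_nonneg_left hle (by linarith)) (by positivity)
        _ = B / (24 * (mo:ℝ)^2) := by field_simp; ring_nf
    calc ((1 / (o:ℝ)) * (∑ t ∈ Finset.Icc 1 o, g (gridPt m (i' * o + t))) - g c) ^ 2
        = |(1 / (o:ℝ)) * (∑ t ∈ Finset.Icc 1 o, g (gridPt m (i' * o + t))) - g c| ^ 2 :=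
          (sq_abs _).symm
      _ ≤ (B / (24 * (mo:ℝ)^2))^2 := by
          apply pow_le_pow_left₀ (abs_nonneg _) habs
      _ = B^2 / (576 * (mo:ℝ)^4) := by rw [div_pow]; ring_nf
  apply le_trans (Finset.sum_le_sum key)
  rw [Finset.sum_const, Nat.card_Icc, Nat.add_sub_cancel, nsmul_eq_mul]
  apply le_of_eq
  field_simp
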